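/- For integer n ≥ 3 and τ ∈ ℂ \ {0}, let C_n[τ] = [[τ·cot(π/n), −τ/sin(π/n)],[1/(τ·sin(π/n)), −cot(π/n)/τ]]. Then det C_n[τ] = 1 and C_n[τ]⁻¹ A_n C_n[τ] = B_n⁻¹ (up to sign in SL(2,ℂ)), where A_n and B_n are as in the explicit normalization above. -/

import Mathlib

open Real Matrix Complex

noncomputable def A (n : ℕ) : Matrix (Fin 2) (Fin 2) ℂ :=
  !![Complex.exp (-(((π / n : ℝ) : ℂ) * Complex.I)), 0;
     0, Complex.exp (((π / n : ℝ) : ℂ) * Complex.I)]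

noncomputable def B (n : ℕ) : Matrix (Fin 2) (Fin 2) ℂ :=
  !![2 * Complex.I / ((Real.sin (π / n) : ℝ) : ℂ) - Complex.exp (((π / n : ℝ) : ℂ) * Complex.I),
     -2 * Complex.I * ((Real.cos (π / n) / Real.sin (π / n) : ℝ) : ℂ);
     2 * Complex.I * ((Real.cos (π / n) / Real.sin (π / n) : ℝ) : ℂ),
     -2 * Complex.I / ((Real.sin (π / n) : ℝ) : ℂ) - Complex.exp (-(((π / n : ℝ) : ℂ) * Complex.I))]

noncomputable def C (n : ℕ) (τ : ℂ) : Matrix (Fin 2) (Fin 2) ℂ :=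
  !![τ * ((Real.cos (π / n) / Real.sin (π / n) : ℝ) : ℂ), -τ / ((Real.sin (π / n) : ℝ) : ℂ);
     1 / (τ * ((Real.sin (π / n) : ℝ) : ℂ)), -((Real.cos (π / n) / Real.sin (π / n) : ℝ) : ℂ) / τ]

theorem stmt9 (n : ℕ) (hn : 3 ≤ n) (τ : ℂ) (hτ : τ ≠ 0) :
    (C n τ).det = 1 ∧
    ((C n τ)⁻¹ * A n * C n τ = (B n)⁻¹ ∨ (C n τ)⁻¹ * A n * C n τ = -((B n)⁻¹)) := by
  have hnpos : (0:ℝ) < n := by positivity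
  have hsr : Real.sin (π / n) ≠ 0 := by
    apply ne_of_gt
    apply Real.sin_pos_of_pos_of_lt_pi
    · positivity
    · calc π / n ≤ π / 3 := by
            apply div_le_div_of_nonneg_left Real.pi_pos.le (by norm_num)
            exact_mod_cast hn
        _ < π := by linarith [Real.pi_pos]
  have hpyr := Real.sin_sq_add_cos_sq (π / n)
  set s : ℂ := ((Real.sin (π / n) : ℝ) : ℂ) with hsdef
  set c : ℂ := ((Real.cos (π / n) : ℝ) : ℂ) with hcdef
  have hs : s ≠ 0 := by rw [hsdef]; exact_mod_cast hsr
  have hpy : s ^ 2 + c ^ 2 = 1 := by rw [hsdef, hcdef]; exact_mod_cast hpyr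
  have he : Complex.exp (((π / n : ℝ) : ℂ) * Complex.I) = c + s * Complex.I := by
    rw [Complex.exp_mul_I, ← Complex.ofReal_cos, ← Complex.ofReal_sin, ← hsdef, ← hcdef]
  have he' : Complex.exp (-(((π / n : ℝ) : ℂ) * Complex.I)) = c - s * Complex.I := by
    rw [← neg_mul, Complex.exp_mul_I, Complex.cos_neg, Complex.sin_neg,
      ← Complex.ofReal_cos, ← Complex.ofReal_sin, ← hsdef, ← hcdef]
    ring
  have hcot : ((Real.cos (π / n) / Real.sin (π / n) : ℝ) : ℂ) = c / s := by
    rw [Complex.ofReal_div, ← hsdef, ← hcdef]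
  have hI : Complex.I ^ 2 = -1 := Complex.I_sq
  have hdetC : (C n τ).det = 1 := by
    rw [C, Matrix.det_fin_two_of, hcot, ← hsdef]
    field_simp
    linear_combination (-1) * hpy
  refine ⟨hdetC, Or.inr ?_⟩
  have hdetB : (B n).det = 1 := by
    rw [B, Matrix.det_fin_two_of, he, he', hcot, ← hsdef]
    field_simp
    linear_combination (-4 - s^4 + 8*c^2 + 4*s^2 - 4*c^2) * hI + (s^2 - 4) * hpy
  have hBu : IsUnit (B n).det := by rw [hdetB]; exact isUnit_one
  have hCu : IsUnit (C n τ).det := by rw [hdetC]; exact isUnit_one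
  have key : A n * C n τ * B n = -(C n τ) := by
    rw [A, B, C, he, he', hcot, ← hsdef, Matrix.mul_fin_two, Matrix.mul_fin_two]
    ext i j
    fin_cases i <;> fin_cases j <;>
      simp only [Matrix.cons_val_zero, Matrix.cons_val_one, Matrix.head_cons, Matrix.of_apply,
        Matrix.cons_val', Matrix.empty_val', Matrix.cons_val_fin_one, Matrix.neg_apply,
        Fin.mk_zero, Fin.mk_one] <;>
      field_simp <;> ring_nf <;>
      first
      | linear_combination (c*s^4*τ)*hI + (-(c*s^2*τ))*hpy
      | linear_combination (τ*(2*c^2*s^4 - 2*s^4 + s^6))*hI + (τ*(-(2*c*s^3*Complex.I) - s^4))*hpy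
      | linear_combination (τ^2*(-(2*c^2*s^4) + 2*s^4 - s^6))*hI + (τ^2*(-(2*c*s^3*Complex.I) + s^4))*hpy
      | linear_combination (-(c*s^6)*τ^2)*hI + (c*s^4*τ^2)*hpy
      | linear_combination (c*s^3*τ^2)*hI + (-(c*s*τ^2))*hpy
      | linear_combination (-(c*s^3))*hI + (c*s)*hpy
      | linear_combination (τ^2*(2*s*(c^2-1)+s^3))*hI + (-(τ^2*(2*c*Complex.I+s)))*hpy
      | linear_combination (-(2*s*(c^2-1)+s^3))*hI + (s-2*c*Complex.I)*hpy
  have h1 : (C n τ)⁻¹ * (A n * C n τ * B n) * (B n)⁻¹ = (C n τ)⁻¹ * A n * C n τ := by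
    simp [Matrix.mul_assoc, Matrix.mul_nonsing_inv _ hBu]
  calc (C n τ)⁻¹ * A n * C n τ = (C n τ)⁻¹ * (A n * C n τ * B n) * (B n)⁻¹ := h1.symm
    _ = -((C n τ)⁻¹ * C n τ) * (B n)⁻¹ := by rw [key]; simp [Matrix.mul_assoc]
    _ = -((B n)⁻¹) := by rw [Matrix.nonsing_inv_mul _ hCu]; simp
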